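/- For every open ball B = B(X, ε) ⊆ X_N (with X ∈ X_N, ε > 0), there exists an integer n ∈ ℕ* such that M^n(B) = X_N, i.e., the n-th iterate of the mutation operator maps B onto the whole phase space. -/

import Mathlib

/-- The discrete metric on ℝ: `ddelta x y = 1` if `x ≠ y`, and `0` otherwise. -/
noncomputable def ddelta (x y : ℝ) : ℝ := if x = y then 0 else 1

/-- `Fdel (x₁, x₂) = |x₁| + δ(0, x₂)`. -/
noncomputable def Fdel (x : ℝ × ℝ) : ℝ := |x.1| + ddelta 0 x.2

/-- A single mutation: a position in `{1,…,N}` together with a nucleotide in `{1,2,3,4}`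
(encoded with `Fin N` and `Fin 4`). -/
abbrev Mut (N : ℕ) := Fin N × Fin 4

/-- A mutations sequence: an infinite sequence of mutations. -/
abbrev MutSeq (N : ℕ) := ℕ → Mut N

/-- A genome of size `N`: a sequence of `N` nucleotides in `{1,2,3,4}` (encoded by `Fin 4`,
where `0,1,2,3` stand for the labels `1,2,3,4`, i.e. `A,C,G,T`). -/
abbrev Genome (N : ℕ) := Fin N → Fin 4

/-- The phase space `X_N = {1,2,3,4}^N × S_N`. -/
abbrev Phase (N : ℕ) := Genome N × MutSeq N

/-- A mutation regarded as a pair of real numbers, using the labels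
`1,…,N` for positions and `1,2,3,4` for nucleotides. -/
noncomputable def mutR {N : ℕ} (m : Mut N) : ℝ × ℝ :=
  ((m.1.1 : ℝ) + 1, (m.2.1 : ℝ) + 1)

/-- `d_G(G, Ǧ) = Σ_{k=1}^{N} δ(G_k, Ǧ_k)`, with `δ` the discrete metric. -/
noncomputable def dG {N : ℕ} (G G' : Genome N) : ℝ :=
  ∑ k : Fin N, if G k = G' k then (0 : ℝ) else 1

/-- `d_S(S, Š) = (9/N) Σ_{k=0}^{∞} F(S^k − Š^k)/10^(k+1)`. -/
noncomputable def dS {N : ℕ} (S S' : MutSeq N) : ℝ :=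
  (9 / N) * ∑' k : ℕ, Fdel (mutR (S k) - mutR (S' k)) / 10 ^ (k + 1)

/-- The distance `d((G,S), (Ǧ,Š)) = d_G(G,Ǧ) + d_S(S,Š)` on the phase space. -/
noncomputable def dX {N : ℕ} (X Y : Phase N) : ℝ := dG X.1 Y.1 + dS X.2 Y.2

/-- The mutation operator `M(G, S) = (G', σ(S))`: the nucleotide of `G` at position `(S⁰)₁`
is replaced by the nucleotide `(S⁰)₂`, and the mutations sequence is shifted. -/
noncomputable def Mop {N : ℕ} (X : Phase N) : Phase N :=
  (Function.update X.1 (X.2 0).1 (X.2 0).2, fun k => X.2 (k + 1))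

/-- A set `U ⊆ X_N` is open for the metric `d` if around any of its points it
contains an open ball of positive radius. -/
def IsOpenD {N : ℕ} (U : Set (Phase N)) : Prop :=
  ∀ x ∈ U, ∃ ε > 0, ∀ y, dX x y < ε → y ∈ U


/-- Apply the first `n` mutations of `S` to `G`. -/
noncomputable def applyMuts {N : ℕ} : ℕ → Genome N → MutSeq N → Genome N
  | 0, G, _ => G
  | n + 1, G, S => applyMuts n (Function.update G (S 0).1 (S 0).2) (fun k => S (k + 1))

lemma applyMuts_succ' {N : ℕ} (n : ℕ) (G : Genome N) (S : MutSeq N) :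
    applyMuts (n + 1) G S = Function.update (applyMuts n G S) (S n).1 (S n).2 := by
  induction n generalizing G S with
  | zero => rfl
  | succ n ih =>
      show applyMuts (n + 1) (Function.update G (S 0).1 (S 0).2) (fun k => S (k + 1)) = _
      rw [ih]
      rfl

lemma Mop_iterate {N : ℕ} (n : ℕ) (G : Genome N) (S : MutSeq N) :
    (Mop (N := N))^[n] (G, S) = (applyMuts n G S, fun k => S (k + n)) := by
  induction n generalizing G S with
  | zero => simp [applyMuts]
  | succ n ih =>
      rw [Function.iterate_succ_apply]
      show (Mop (N := N))^[n]
        (Function.update G (S 0).1 (S 0).2, fun k => S (k + 1)) = _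
      rw [ih]
      refine Prod.ext rfl ?_
      funext k
      exact congrArg S (by omega)

lemma applyMuts_covers {N : ℕ} (m : ℕ) (G H : Genome N) (S : MutSeq N)
    (hS : ∀ j : Fin N, S (m + j.1) = (j, H j)) :
    applyMuts (m + N) G S = H := by
  suffices h : ∀ j ≤ N, ∀ p : Fin N, p.1 < j → applyMuts (m + j) G S p = H p by
    funext p
    exact h N le_rfl p p.2
  intro j
  induction j with
  | zero => intro _ p hp; omega
  | succ j ih =>
      intro hj p hp
      have hjN : j < N := by omega
      rw [show m + (j + 1) = (m + j) + 1 by omega, applyMuts_succ']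
      have hSj := hS ⟨j, hjN⟩
      rw [hSj]
      by_cases hpj : p = ⟨j, hjN⟩
      · subst hpj
        simp
      · rw [Function.update_of_ne hpj]
        refine ih (by omega) p ?_
        have : p.1 ≠ j := fun h => hpj (Fin.ext h)
        omega

lemma Fdel_nonneg (x : ℝ × ℝ) : 0 ≤ Fdel x := by
  unfold Fdel ddelta
  positivity

lemma Fdel_mutR_le {N : ℕ} (a b : Mut N) : Fdel (mutR a - mutR b) ≤ N := by
  unfold Fdel mutR ddelta
  have h1 : (a.1.1 : ℝ) < N := by exact_mod_cast a.1.2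
  have h2 : (b.1.1 : ℝ) < N := by exact_mod_cast b.1.2
  have h3 : (0 : ℝ) ≤ (a.1.1 : ℝ) := Nat.cast_nonneg _
  have h4 : (0 : ℝ) ≤ (b.1.1 : ℝ) := Nat.cast_nonneg _
  have h1' : (a.1.1 : ℝ) + 1 ≤ N := by exact_mod_cast a.1.2
  have h2' : (b.1.1 : ℝ) + 1 ≤ N := by exact_mod_cast b.1.2
  have habs : |((a.1.1 : ℝ) + 1) - ((b.1.1 : ℝ) + 1)| ≤ (N : ℝ) - 1 := by
    rw [abs_le]
    constructor <;> linarith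
  simp only [Prod.fst_sub, Prod.snd_sub]
  split <;> simp at * <;> linarith

lemma Fdel_mutR_self {N : ℕ} (a : Mut N) : Fdel (mutR a - mutR a) = 0 := by
  simp [Fdel, mutR, ddelta]

/-- If two mutation sequences agree on the first `m` terms, their distance is
at most `(1/10)^m`. -/
lemma dS_le_of_agree {N : ℕ} (hN : 1 ≤ N) (m : ℕ) (S S' : MutSeq N)
    (h : ∀ k < m, S k = S' k) : dS S S' ≤ (1 / 10 : ℝ) ^ m := by
  set f : ℕ → ℝ := fun k => Fdel (mutR (S k) - mutR (S' k)) / 10 ^ (k + 1) with hf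
  have hNpos : (0 : ℝ) < N := by exact_mod_cast hN
  have hf0 : ∀ k, 0 ≤ f k := fun k => by
    apply div_nonneg (Fdel_nonneg _) (by positivity)
  have hfb : ∀ k, f k ≤ (N : ℝ) * (1 / 10) ^ (k + 1) := by
    intro k
    have h10 : (0 : ℝ) < 10 ^ (k + 1) := by positivity
    rw [div_le_iff₀ h10]
    calc Fdel (mutR (S k) - mutR (S' k)) ≤ (N : ℝ) := Fdel_mutR_le _ _
    _ = (N : ℝ) * (1 / 10) ^ (k + 1) * 10 ^ (k + 1) := by
        rw [div_pow, one_pow, mul_assoc, div_mul_cancel₀]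
        · ring
        · positivity
  have hgeom : Summable (fun k : ℕ => (1 / 10 : ℝ) ^ k) :=
    summable_geometric_of_lt_one (by norm_num) (by norm_num)
  have hgsum : Summable (fun k : ℕ => (N : ℝ) * (1 / 10 : ℝ) ^ (k + 1)) := by
    apply Summable.congr (hgeom.mul_left ((N : ℝ) * (1 / 10)))
    intro k
    rw [pow_succ]
    ring
  have hsum : Summable f := Summable.of_nonneg_of_le hf0 hfb hgsum
  have hzero : ∑ i ∈ Finset.range m, f i = 0 := by
    apply Finset.sum_eq_zero
    intro i hi
    have := h i (Finset.mem_range.1 hi)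
    simp [hf, this, Fdel, ddelta]
  have hshift := hsum.sum_add_tsum_nat_add m
  have hkey : ∑' k, f k = ∑' k, f (k + m) := by
    rw [← hshift, hzero, zero_add]
  have hfb' : ∀ k, f (k + m) ≤ ((N : ℝ) * (1 / 10) ^ (m + 1)) * (1 / 10) ^ k := by
    intro k
    calc f (k + m) ≤ (N : ℝ) * (1 / 10) ^ (k + m + 1) := hfb _
    _ = ((N : ℝ) * (1 / 10) ^ (m + 1)) * (1 / 10) ^ k := by
        rw [show k + m + 1 = (m + 1) + k by omega, pow_add]; ring
  have hsum' : Summable (fun k => f (k + m)) := (summable_nat_add_iff m).2 hsum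
  have hgsum' : Summable (fun k : ℕ => ((N : ℝ) * (1 / 10) ^ (m + 1)) * (1 / 10) ^ k) :=
    hgeom.mul_left _
  have htsum_le : ∑' k, f (k + m) ≤ ((N : ℝ) * (1 / 10) ^ (m + 1)) * (10 / 9) := by
    calc ∑' k, f (k + m)
        ≤ ∑' k : ℕ, ((N : ℝ) * (1 / 10) ^ (m + 1)) * (1 / 10) ^ k :=
          Summable.tsum_le_tsum hfb' hsum' hgsum'
      _ = ((N : ℝ) * (1 / 10) ^ (m + 1)) * (10 / 9) := by
          rw [tsum_mul_left, tsum_geometric_of_lt_one (by norm_num) (by norm_num)]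
          norm_num
  unfold dS
  rw [← hf, hkey]
  have h9N : (0 : ℝ) ≤ 9 / N := by positivity
  calc (9 / (N : ℝ)) * ∑' k, f (k + m)
      ≤ (9 / (N : ℝ)) * (((N : ℝ) * (1 / 10) ^ (m + 1)) * (10 / 9)) :=
        mul_le_mul_of_nonneg_left htsum_le h9N
    _ = (1 / 10 : ℝ) ^ m := by
        rw [pow_succ]
        field_simp

/-- For every open ball `B(X, ε) ⊆ X_N`, there exists `n ∈ ℕ*` such that the `n`-th
iterate of the mutation operator maps this ball onto the whole phase space:
`M^n(B(X, ε)) = X_N`. -/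
theorem Mop_ball_onto (N : ℕ) (hN : 1 ≤ N) :
    ∀ X : Phase N, ∀ ε > (0 : ℝ),
      ∃ n : ℕ, 1 ≤ n ∧
        (Mop (N := N))^[n] '' {Y : Phase N | dX X Y < ε} = Set.univ := by
  intro X ε hε
  obtain ⟨m, hm⟩ := exists_pow_lt_of_lt_one hε (by norm_num : (1 / 10 : ℝ) < 1)
  refine ⟨m + N, by omega, ?_⟩
  rw [Set.eq_univ_iff_forall]
  rintro ⟨H, T⟩
  -- construct the preimage
  set S' : MutSeq N := fun k =>
    if h : k < m then X.2 k
    else if h2 : k - m < N then (⟨k - m, h2⟩, H ⟨k - m, h2⟩)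
    else T (k - (m + N)) with hS'
  refine ⟨(X.1, S'), ?_, ?_⟩
  · -- in the ball
    show dX X (X.1, S') < ε
    have hdG : dG X.1 X.1 = 0 := by simp [dG]
    have hagree : ∀ k < m, X.2 k = S' k := by
      intro k hk
      simp [hS', hk]
    have := dS_le_of_agree hN m X.2 S' hagree
    unfold dX
    rw [hdG, zero_add]
    linarith
  · -- maps to (H, T)
    rw [Mop_iterate]
    refine Prod.ext ?_ ?_
    · apply applyMuts_covers
      intro j
      have h1 : ¬ (m + j.1 < m) := by omega
      have h2 : m + j.1 - m < N := by omega
      simp only [hS', h1, dif_neg, not_false_iff, h2, dif_pos]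
      have hj : (⟨m + j.1 - m, h2⟩ : Fin N) = j := by
        apply Fin.ext
        show m + j.1 - m = j.1
        omega
      rw [hj]
    · funext k
      have h1 : ¬ (k + (m + N) < m) := by omega
      have h2 : ¬ (k + (m + N) - m < N) := by omega
      simp only [hS', h1, dif_neg, not_false_iff, h2]
      congr 1
      omega
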